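/- Let α ∈ Δ^{re} be a positive real root with coordinates (k₁,…,k_{r+1}), and suppose k_{r+1} ≥ 1. Then k_i ≤ k_{r+1} for every i = 1,…,r. -/

import Mathlib

open Finset

/-- The fundamental reflection `w_i` as a function on `ℤ^{r+1}`. -/
def wFun (r : ℕ) (i : Fin (r + 1)) (k : Fin (r + 1) → ℤ) : Fin (r + 1) → ℤ :=
  fun j =>
    if j = i then
      if i = Fin.last r then (∑ l : Fin r, k l.castSucc) - k (Fin.last r)
      else k (Fin.last r) - k i
    else k j

lemma wFun_apply_ne (r : ℕ) (i : Fin (r + 1)) (k : Fin (r + 1) → ℤ) {j : Fin (r + 1)}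
    (h : j ≠ i) : wFun r i k j = k j := by
  simp [wFun, h]

lemma wFun_involutive (r : ℕ) (i : Fin (r + 1)) : Function.Involutive (wFun r i) := by
  intro k
  funext j
  by_cases hj : j = i
  · subst hj
    by_cases hl : j = Fin.last r
    · subst hl
      have h1 : ∀ l : Fin r, wFun r (Fin.last r) k l.castSucc = k l.castSucc := fun l =>
        wFun_apply_ne _ _ _ (Fin.castSucc_lt_last l).ne
      have h0 : wFun r (Fin.last r) k (Fin.last r)
          = (∑ l : Fin r, k l.castSucc) - k (Fin.last r) := by
        simp [wFun]
      have h2 : wFun r (Fin.last r) (wFun r (Fin.last r) k) (Fin.last r)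
          = (∑ l : Fin r, wFun r (Fin.last r) k l.castSucc)
              - wFun r (Fin.last r) k (Fin.last r) := by
        simp [wFun]
      rw [h2, h0]
      simp only [h1]
      ring
    · have hlast : Fin.last r ≠ j := fun h => hl h.symm
      have h1 : wFun r j k (Fin.last r) = k (Fin.last r) := wFun_apply_ne _ _ _ hlast
      have h0 : wFun r j k j = k (Fin.last r) - k j := by
        simp [wFun, hl]
      have h2 : wFun r j (wFun r j k) j
          = wFun r j k (Fin.last r) - wFun r j k j := by
        simp [wFun, hl]
      rw [h2, h1, h0]
      ring
  · rw [wFun_apply_ne _ _ _ hj, wFun_apply_ne _ _ _ hj]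

/-- The fundamental reflection `w_i` as a permutation of `ℤ^{r+1}`. -/
def wRefl (r : ℕ) (i : Fin (r + 1)) : Equiv.Perm (Fin (r + 1) → ℤ) :=
  (wFun_involutive r i).toPerm

/-- The Weyl group `W = ⟨w₁, …, w_{r+1}⟩`. -/
def weylW (r : ℕ) : Subgroup (Equiv.Perm (Fin (r + 1) → ℤ)) :=
  Subgroup.closure (Set.range fun i : Fin (r + 1) => wRefl r i)

/-- The set of real roots `Δ^{re} = W·{e₁, …, e_{r+1}}`. -/
def realRoots (r : ℕ) : Set (Fin (r + 1) → ℤ) :=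
  {α | ∃ w ∈ weylW r, ∃ i : Fin (r + 1), α = w (Pi.single i 1)}

namespace Star

open Finset

variable {r : ℕ}

/-- basis vector -/
def ee (r : ℕ) (a : Fin (r+1)) : Fin (r+1) → ℤ := Pi.single a 1

lemma ee_apply (a j : Fin (r+1)) : ee r a j = if j = a then 1 else 0 := by
  simp [ee, Pi.single_apply]

lemma ee_apply_self (a : Fin (r+1)) : ee r a a = 1 := by simp [ee_apply]

lemma ee_apply_ne {a j : Fin (r+1)} (h : j ≠ a) : ee r a j = 0 := by simp [ee_apply, h]

lemma wRefl_apply (i : Fin (r+1)) (k : Fin (r+1) → ℤ) : wRefl r i k = wFun r i k := rfl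

lemma wRefl_sq (i : Fin (r+1)) : wRefl r i * wRefl r i = 1 := by
  apply Equiv.ext
  intro x
  simp only [Equiv.Perm.mul_apply, Equiv.Perm.one_apply]
  exact wFun_involutive r i x

lemma wRefl_inv (i : Fin (r+1)) : (wRefl r i)⁻¹ = wRefl r i := by
  rw [inv_eq_iff_mul_eq_one, wRefl_sq]

lemma wFun_last_last (x : Fin (r+1) → ℤ) :
    wFun r (Fin.last r) x (Fin.last r) = (∑ l : Fin r, x l.castSucc) - x (Fin.last r) := by
  simp [wFun]

lemma wFun_leaf_self {a : Fin (r+1)} (ha : a ≠ Fin.last r) (x : Fin (r+1) → ℤ) :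
    wFun r a x a = x (Fin.last r) - x a := by
  simp [wFun, ha]

/-- additivity -/
def IsAdd (f : (Fin (r+1) → ℤ) → (Fin (r+1) → ℤ)) : Prop :=
  ∀ x y, f (x + y) = f x + f y

lemma isAdd_wRefl (i : Fin (r+1)) : IsAdd (⇑(wRefl r i)) := by
  intro x y
  funext j
  rw [wRefl_apply, wRefl_apply, wRefl_apply, Pi.add_apply]
  by_cases hj : j = i
  · subst hj
    by_cases hl : j = Fin.last r
    · subst hl
      rw [wFun_last_last, wFun_last_last, wFun_last_last, Pi.add_apply,
        Finset.sum_congr rfl (fun l _ => Pi.add_apply x y l.castSucc),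
        Finset.sum_add_distrib]
      ring
    · rw [wFun_leaf_self hl, wFun_leaf_self hl, wFun_leaf_self hl, Pi.add_apply, Pi.add_apply]
      ring
  · rw [wFun_apply_ne _ _ _ hj, wFun_apply_ne _ _ _ hj, wFun_apply_ne _ _ _ hj, Pi.add_apply]

lemma isAdd_one : IsAdd (⇑(1 : Equiv.Perm (Fin (r+1) → ℤ))) := by
  intro x y; rfl

lemma isAdd_mul {u v : Equiv.Perm (Fin (r+1) → ℤ)} (hu : IsAdd (⇑u)) (hv : IsAdd (⇑v)) :
    IsAdd (⇑(u * v)) := by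
  intro x y
  simp only [Equiv.Perm.mul_apply, hv x y, hu (v x) (v y)]

lemma IsAdd.zero {f : (Fin (r+1) → ℤ) → (Fin (r+1) → ℤ)} (hf : IsAdd f) : f 0 = 0 := by
  have h := hf 0 0
  rw [add_zero] at h
  have h2 : f 0 + 0 = f 0 + f 0 := by rw [add_zero]; exact h
  exact (add_left_cancel h2).symm

lemma IsAdd.neg {f : (Fin (r+1) → ℤ) → (Fin (r+1) → ℤ)} (hf : IsAdd f) (x : Fin (r+1) → ℤ) :
    f (-x) = - f x := by
  have h := hf x (-x)
  rw [add_neg_cancel, hf.zero] at h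
  exact (neg_eq_of_add_eq_zero_right h.symm).symm

lemma IsAdd.eval (f : (Fin (r+1) → ℤ) → (Fin (r+1) → ℤ)) (hf : IsAdd f) (x : Fin (r+1) → ℤ) :
    f x = ∑ j, x j • f (ee r j) := by
  let F : (Fin (r+1) → ℤ) →+ (Fin (r+1) → ℤ) := AddMonoidHom.mk' f hf
  have hFf : ∀ y, f y = F y := fun y => rfl
  have hx : x = ∑ j, Pi.single j (x j) := (Finset.univ_sum_single x).symm
  rw [hFf]
  conv_lhs => rw [hx]
  rw [map_sum]
  apply Finset.sum_congr rfl
  intro j _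
  have h1 : (Pi.single j (x j) : Fin (r+1) → ℤ) = x j • ee r j := by
    unfold ee
    rw [← Pi.single_smul]
    simp
  rw [h1, map_zsmul]
  rfl

lemma ext_of_isAdd {u v : Equiv.Perm (Fin (r+1) → ℤ)} (hu : IsAdd (⇑u)) (hv : IsAdd (⇑v))
    (h : ∀ j, u (ee r j) = v (ee r j)) : u = v := by
  apply Equiv.ext
  intro x
  rw [show u x = _ from hu.eval _ x, show v x = _ from hv.eval _ x]
  simp only [h]

/-! ### Action on basis vectors -/

lemma sum_ee_castSucc {a : Fin (r+1)} (ha : a ≠ Fin.last r) :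
    (∑ l : Fin r, ee r a l.castSucc) = 1 := by
  obtain ⟨a0, rfl⟩ := Fin.exists_castSucc_eq.mpr ha
  have h : ∀ l : Fin r, ee r a0.castSucc l.castSucc = if l = a0 then 1 else 0 := by
    intro l
    rw [ee_apply]
    simp [Fin.castSucc_inj]
  rw [Finset.sum_congr rfl (fun l _ => h l)]
  simp

lemma sum_last_zero : (∑ l : Fin r, ee r (Fin.last r) l.castSucc) = 0 := by
  apply Finset.sum_eq_zero
  intro l _
  exact ee_apply_ne (Fin.castSucc_lt_last l).ne

/-- A1: w_a (e_a) = -e_a -/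
lemma wRefl_ee_self (a : Fin (r+1)) : wRefl r a (ee r a) = - ee r a := by
  funext j
  rw [wRefl_apply, Pi.neg_apply]
  by_cases hj : j = a
  · subst hj
    by_cases hl : j = Fin.last r
    · subst hl
      rw [wFun_last_last, sum_last_zero, ee_apply_self]
      ring
    · rw [wFun_leaf_self hl, ee_apply_self,
        ee_apply_ne (show Fin.last r ≠ j from fun h => hl h.symm)]
      ring
  · rw [wFun_apply_ne _ _ _ hj, ee_apply_ne hj]
    ring

/-- A2: distinct leaves -/
lemma wRefl_ee_other {a b : Fin (r+1)} (ha : a ≠ Fin.last r) (hb : b ≠ Fin.last r)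
    (hab : a ≠ b) : wRefl r a (ee r b) = ee r b := by
  funext j
  rw [wRefl_apply]
  by_cases hj : j = a
  · subst hj
    rw [wFun_leaf_self ha,
      ee_apply_ne (show Fin.last r ≠ b from fun h => hb h.symm),
      ee_apply_ne (show j ≠ b from hab)]
    ring
  · exact wFun_apply_ne _ _ _ hj

/-- A3: w_last (e_b) = e_b + e_last for a leaf b -/
lemma wRefl_last_ee {b : Fin (r+1)} (hb : b ≠ Fin.last r) :
    wRefl r (Fin.last r) (ee r b) = ee r b + ee r (Fin.last r) := by
  funext j
  rw [wRefl_apply, Pi.add_apply]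
  by_cases hj : j = Fin.last r
  · subst hj
    rw [wFun_last_last, sum_ee_castSucc hb,
      ee_apply_ne (show Fin.last r ≠ b from fun h => hb h.symm), ee_apply_self]
    norm_num
  · rw [wFun_apply_ne _ _ _ hj, ee_apply_ne hj, add_zero]

/-- A4: w_b (e_last) = e_last + e_b for a leaf b -/
lemma wRefl_ee_last {b : Fin (r+1)} (hb : b ≠ Fin.last r) :
    wRefl r b (ee r (Fin.last r)) = ee r (Fin.last r) + ee r b := by
  funext j
  rw [wRefl_apply, Pi.add_apply]
  by_cases hj : j = b
  · subst hj
    rw [wFun_leaf_self hb]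
    simp [ee_apply_self, ee_apply_ne hb]
  · rw [wFun_apply_ne _ _ _ hj, ee_apply_ne hj, add_zero]

/-- leaf reflections preserve the last coordinate -/
lemma wRefl_last_coord {a : Fin (r+1)} (ha : a ≠ Fin.last r) (x : Fin (r+1) → ℤ) :
    wRefl r a x (Fin.last r) = x (Fin.last r) := by
  rw [wRefl_apply]
  exact wFun_apply_ne _ _ _ (fun h => ha h.symm)

lemma wRefl_leaf_coord {a : Fin (r+1)} (ha : a ≠ Fin.last r) (x : Fin (r+1) → ℤ) :
    wRefl r a x a = x (Fin.last r) - x a := by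
  rw [wRefl_apply]
  exact wFun_leaf_self ha x

/-! ### Simple facts about generators -/

lemma wRefl_ne_one (a : Fin (r+1)) : wRefl r a ≠ 1 := by
  intro h
  have h1 : wRefl r a (ee r a) = ee r a := by rw [h]; rfl
  rw [wRefl_ee_self] at h1
  have h2 := congrFun h1 a
  rw [Pi.neg_apply, ee_apply_self] at h2
  omega

lemma wRefl_index_inj {a b : Fin (r+1)} (h : wRefl r a = wRefl r b) : a = b := by
  by_contra hab
  have h1 : wRefl r b (ee r a) = - ee r a := by rw [← h, wRefl_ee_self]
  have h2 := congrFun h1 a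
  rw [Pi.neg_apply, ee_apply_self] at h2
  rcases eq_or_ne b (Fin.last r) with hb | hb
  · subst hb
    rcases eq_or_ne a (Fin.last r) with ha | ha
    · exact hab (ha.trans rfl)
    · rw [wRefl_last_ee ha, Pi.add_apply, ee_apply_self, ee_apply_ne ha] at h2
      omega
  · rcases eq_or_ne a (Fin.last r) with ha | ha
    · subst ha
      rw [wRefl_ee_last hb, Pi.add_apply, ee_apply_self,
        ee_apply_ne (fun hh => hb hh.symm)] at h2
      omega
    · rw [wRefl_ee_other hb ha (fun hh => hab hh.symm), ee_apply_self] at h2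
      omega

/-! ### Relations -/

lemma wRefl_comm {a b : Fin (r+1)} (ha : a ≠ Fin.last r) (hb : b ≠ Fin.last r)
    (hab : a ≠ b) : wRefl r a * wRefl r b = wRefl r b * wRefl r a := by
  have hsa := isAdd_wRefl (r := r) a
  have hsb := isAdd_wRefl (r := r) b
  have da : ∀ x y, wRefl r a (x + y) = wRefl r a x + wRefl r a y := hsa
  have db : ∀ x y, wRefl r b (x + y) = wRefl r b x + wRefl r b y := hsb
  have na : ∀ x, wRefl r a (-x) = - wRefl r a x := hsa.neg
  have nb : ∀ x, wRefl r b (-x) = - wRefl r b x := hsb.neg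
  apply ext_of_isAdd (isAdd_mul hsa hsb) (isAdd_mul hsb hsa)
  intro j
  simp only [Equiv.Perm.mul_apply]
  rcases eq_or_ne j a with rfl | hja
  · simp only [wRefl_ee_self, da, db, na, nb, wRefl_ee_other hb ha (Ne.symm hab)]
  · rcases eq_or_ne j b with rfl | hjb
    · simp only [wRefl_ee_self, da, db, na, nb, wRefl_ee_other ha hb hab]
    · rcases eq_or_ne j (Fin.last r) with rfl | hjl
      · simp only [wRefl_ee_last ha, wRefl_ee_last hb, da, db,
          wRefl_ee_other ha hb hab, wRefl_ee_other hb ha (Ne.symm hab)]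
        abel
      · simp only [wRefl_ee_other ha hjl (Ne.symm hja), wRefl_ee_other hb hjl (Ne.symm hjb)]

lemma wRefl_braid {a : Fin (r+1)} (ha : a ≠ Fin.last r) :
    wRefl r a * wRefl r (Fin.last r) * wRefl r a
      = wRefl r (Fin.last r) * wRefl r a * wRefl r (Fin.last r) := by
  have hsa := isAdd_wRefl (r := r) a
  have hsl := isAdd_wRefl (r := r) (Fin.last r)
  have da : ∀ x y, wRefl r a (x + y) = wRefl r a x + wRefl r a y := hsa
  have dl : ∀ x y, wRefl r (Fin.last r) (x + y)
      = wRefl r (Fin.last r) x + wRefl r (Fin.last r) y := hsl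
  have na : ∀ x, wRefl r a (-x) = - wRefl r a x := hsa.neg
  have nl : ∀ x, wRefl r (Fin.last r) (-x) = - wRefl r (Fin.last r) x := hsl.neg
  apply ext_of_isAdd (isAdd_mul (isAdd_mul hsa hsl) hsa) (isAdd_mul (isAdd_mul hsl hsa) hsl)
  intro j
  simp only [Equiv.Perm.mul_apply]
  rcases eq_or_ne j a with rfl | hja
  · simp only [wRefl_ee_self, da, dl, na, nl, wRefl_last_ee ha, wRefl_ee_last ha]
    abel
  · rcases eq_or_ne j (Fin.last r) with rfl | hjl
    · simp only [wRefl_ee_self, da, dl, na, nl, wRefl_last_ee ha, wRefl_ee_last ha]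
      abel
    · simp only [wRefl_ee_self, da, dl, na, nl, wRefl_last_ee ha, wRefl_ee_last ha,
        wRefl_ee_other ha hjl (Ne.symm hja), wRefl_last_ee hjl]
      abel

/-! ### Distinguishing lemmas -/

lemma coordb {u v : Fin (r+1)} (huv : u ≠ v) : (wRefl r u (ee r v)) v = 1 := by
  rcases eq_or_ne u (Fin.last r) with rfl | hu
  · rw [wRefl_last_ee (Ne.symm huv), Pi.add_apply, ee_apply_self, ee_apply_ne (Ne.symm huv)]
    norm_num
  · rcases eq_or_ne v (Fin.last r) with rfl | hv
    · rw [wRefl_ee_last hu, Pi.add_apply, ee_apply_self, ee_apply_ne (Ne.symm hu)]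
      norm_num
    · rw [wRefl_ee_other hu hv huv, ee_apply_self]

/-- L1 : a product of two distinct generators is not a generator. -/
lemma L1 {a b k : Fin (r+1)} (hab : a ≠ b) : wRefl r a * wRefl r b ≠ wRefl r k := by
  intro h
  rcases eq_or_ne k a with rfl | hka
  · have : wRefl r k * wRefl r b = wRefl r k * 1 := by rw [mul_one]; exact h
    exact wRefl_ne_one b (mul_left_cancel this)
  rcases eq_or_ne k b with rfl | hkb
  · have : wRefl r a * wRefl r k = 1 * wRefl r k := by rw [one_mul]; exact h
    exact wRefl_ne_one a (mul_right_cancel this)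
  have hval : (wRefl r a * wRefl r b) (ee r b) = wRefl r k (ee r b) := by rw [h]
  rw [Equiv.Perm.mul_apply, wRefl_ee_self, (isAdd_wRefl a).neg] at hval
  have h2 := congrFun hval b
  rw [Pi.neg_apply, coordb hab, coordb hkb] at h2
  omega

/-- value of the braid word on e_last -/
lemma braid_val {a : Fin (r+1)} (ha : a ≠ Fin.last r) :
    (wRefl r a * wRefl r (Fin.last r) * wRefl r a) (ee r (Fin.last r)) = - ee r a := by
  have hsa := isAdd_wRefl (r := r) a
  have hsl := isAdd_wRefl (r := r) (Fin.last r)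
  have da : ∀ x y, wRefl r a (x + y) = wRefl r a x + wRefl r a y := hsa
  have dl : ∀ x y, wRefl r (Fin.last r) (x + y)
      = wRefl r (Fin.last r) x + wRefl r (Fin.last r) y := hsl
  have na : ∀ x, wRefl r a (-x) = - wRefl r a x := hsa.neg
  have nl : ∀ x, wRefl r (Fin.last r) (-x) = - wRefl r (Fin.last r) x := hsl.neg
  simp only [Equiv.Perm.mul_apply, wRefl_ee_last ha, dl, da, nl, na, wRefl_ee_self,
    wRefl_last_ee ha]
  abel

/-- L2 : the braid word is not a generator -/
lemma L2 {a k : Fin (r+1)} (ha : a ≠ Fin.last r) :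
    wRefl r a * wRefl r (Fin.last r) * wRefl r a ≠ wRefl r k := by
  intro h
  have hval : wRefl r k (ee r (Fin.last r)) = - ee r a := by rw [← h]; exact braid_val ha
  rcases eq_or_ne k (Fin.last r) with rfl | hk
  · have h2 := congrFun hval a
    rw [wRefl_ee_self, Pi.neg_apply, Pi.neg_apply, ee_apply_ne ha, ee_apply_self] at h2
    omega
  · have h2 := congrFun hval (Fin.last r)
    rw [wRefl_ee_last hk, Pi.add_apply, Pi.neg_apply, ee_apply_self,
      ee_apply_ne (Ne.symm hk), ee_apply_ne (Ne.symm ha)] at h2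
    omega

/-- L3 : the braid word is not a product of two generators -/
lemma L3 {a k l : Fin (r+1)} (ha : a ≠ Fin.last r) :
    wRefl r a * wRefl r (Fin.last r) * wRefl r a ≠ wRefl r k * wRefl r l := by
  intro h
  have hsk := isAdd_wRefl (r := r) k
  have hval : wRefl r k (wRefl r l (ee r (Fin.last r))) = - ee r a := by
    rw [← Equiv.Perm.mul_apply, ← h]; exact braid_val ha
  rcases eq_or_ne l (Fin.last r) with rfl | hl
  · rw [wRefl_ee_self, hsk.neg] at hval
    rcases eq_or_ne k (Fin.last r) with rfl | hk
    · rw [wRefl_ee_self, neg_neg] at hval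
      have h2 := congrFun hval a
      rw [Pi.neg_apply, ee_apply_ne ha, ee_apply_self] at h2
      omega
    · rw [wRefl_ee_last hk] at hval
      have h2 := congrFun hval (Fin.last r)
      rw [Pi.neg_apply, Pi.neg_apply, Pi.add_apply, ee_apply_self,
        ee_apply_ne (Ne.symm hk), ee_apply_ne (Ne.symm ha)] at h2
      omega
  · rw [wRefl_ee_last hl] at hval
    rcases eq_or_ne k (Fin.last r) with rfl | hk
    · have dl : ∀ x y, wRefl r (Fin.last r) (x + y)
          = wRefl r (Fin.last r) x + wRefl r (Fin.last r) y := isAdd_wRefl (Fin.last r)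
      rw [dl, wRefl_ee_self, wRefl_last_ee hl] at hval
      have h2 := congrFun hval a
      rw [Pi.add_apply, Pi.add_apply, Pi.neg_apply, Pi.neg_apply,
        ee_apply_ne ha, ee_apply_self] at h2
      rcases eq_or_ne a l with rfl | hal
      · rw [ee_apply_self] at h2
        omega
      · rw [ee_apply_ne hal] at h2
        omega
    · have dk : ∀ x y, wRefl r k (x + y) = wRefl r k x + wRefl r k y := hsk
      rw [dk, wRefl_ee_last hk] at hval
      have h2 := congrFun hval (Fin.last r)
      rw [Pi.add_apply, Pi.add_apply, Pi.neg_apply, ee_apply_self,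
        ee_apply_ne (Ne.symm hk), ee_apply_ne (Ne.symm ha)] at h2
      -- h2 : 1 + 0 + (wRefl r k (ee r l)) (Fin.last r) = -0
      have h4 : (wRefl r k (ee r l)) (Fin.last r) = 0 := by
        rw [wRefl_last_coord hk, ee_apply_ne (Ne.symm hl)]
      rw [h4] at h2
      omega

/-! ### Words and length -/

noncomputable def word (r : ℕ) (L : List (Fin (r+1))) : Equiv.Perm (Fin (r+1) → ℤ) :=
  (L.map (wRefl r)).prod

def isWP (r : ℕ) (g : Equiv.Perm (Fin (r+1) → ℤ)) : Prop := ∃ L, word r L = g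

noncomputable def ln (r : ℕ) (g : Equiv.Perm (Fin (r+1) → ℤ)) : ℕ :=
  sInf {n | ∃ L, word r L = g ∧ L.length = n}

lemma word_nil : word r [] = 1 := rfl

lemma word_cons (a : Fin (r+1)) (L : List (Fin (r+1))) :
    word r (a :: L) = wRefl r a * word r L := by
  simp [word]

lemma word_append (L M : List (Fin (r+1))) : word r (L ++ M) = word r L * word r M := by
  simp [word]

lemma word_singleton (a : Fin (r+1)) : word r [a] = wRefl r a := by
  simp [word]

lemma word_reverse (L : List (Fin (r+1))) : word r L.reverse = (word r L)⁻¹ := by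
  induction L with
  | nil => simp [word]
  | cons a L ih =>
      rw [List.reverse_cons, word_append, ih, word_singleton, word_cons, mul_inv_rev,
        wRefl_inv]

lemma isWP_one : isWP r 1 := ⟨[], rfl⟩

lemma isWP_gen (a : Fin (r+1)) : isWP r (wRefl r a) := ⟨[a], word_singleton a⟩

lemma isWP_mul {g h : Equiv.Perm (Fin (r+1) → ℤ)} (hg : isWP r g) (hh : isWP r h) :
    isWP r (g * h) := by
  obtain ⟨L, rfl⟩ := hg
  obtain ⟨M, rfl⟩ := hh
  exact ⟨L ++ M, word_append L M⟩

lemma isWP_inv {g : Equiv.Perm (Fin (r+1) → ℤ)} (hg : isWP r g) : isWP r g⁻¹ := by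
  obtain ⟨L, rfl⟩ := hg
  exact ⟨L.reverse, word_reverse L⟩

lemma isWP_word_isAdd (L : List (Fin (r+1))) : IsAdd (⇑(word r L)) := by
  induction L with
  | nil => exact isAdd_one
  | cons a L ih => rw [word_cons]; exact isAdd_mul (isAdd_wRefl a) ih

lemma isWP_isAdd {g : Equiv.Perm (Fin (r+1) → ℤ)} (hg : isWP r g) : IsAdd (⇑g) := by
  obtain ⟨L, rfl⟩ := hg
  exact isWP_word_isAdd L

lemma ln_le {L : List (Fin (r+1))} {g : Equiv.Perm (Fin (r+1) → ℤ)} (h : word r L = g) :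
    ln r g ≤ L.length :=
  Nat.sInf_le ⟨L, h, rfl⟩

lemma exists_min_word {g : Equiv.Perm (Fin (r+1) → ℤ)} (hg : isWP r g) :
    ∃ L, word r L = g ∧ L.length = ln r g := by
  obtain ⟨L, hL⟩ := hg
  have hne : {n | ∃ L, word r L = g ∧ L.length = n}.Nonempty := ⟨L.length, L, hL, rfl⟩
  exact Nat.sInf_mem hne

lemma ln_one : ln r (1 : Equiv.Perm (Fin (r+1) → ℤ)) = 0 :=
  Nat.le_zero.mp (ln_le word_nil)

lemma eq_one_of_ln_zero {g : Equiv.Perm (Fin (r+1) → ℤ)} (hg : isWP r g) (h : ln r g = 0) :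
    g = 1 := by
  obtain ⟨L, hL, hlen⟩ := exists_min_word hg
  rw [h] at hlen
  rw [List.length_eq_zero_iff.mp hlen] at hL
  exact hL.symm.trans word_nil

lemma ln_pos_of_ne_one {g : Equiv.Perm (Fin (r+1) → ℤ)} (hg : isWP r g) (h : g ≠ 1) :
    1 ≤ ln r g := by
  rcases Nat.eq_zero_or_pos (ln r g) with h0 | h1
  · exact absurd (eq_one_of_ln_zero hg h0) h
  · exact h1

lemma ln_mul_le {g h : Equiv.Perm (Fin (r+1) → ℤ)} (hg : isWP r g) (hh : isWP r h) :
    ln r (g * h) ≤ ln r g + ln r h := by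
  obtain ⟨L, hL, hlenL⟩ := exists_min_word hg
  obtain ⟨M, hM, hlenM⟩ := exists_min_word hh
  have : word r (L ++ M) = g * h := by rw [word_append, hL, hM]
  calc ln r (g * h) ≤ (L ++ M).length := ln_le this
    _ = ln r g + ln r h := by rw [List.length_append, hlenL, hlenM]

lemma ln_gen (a : Fin (r+1)) : ln r (wRefl r a) = 1 := by
  have h1 : ln r (wRefl r a) ≤ 1 := ln_le (word_singleton a)
  have h2 := ln_pos_of_ne_one (isWP_gen a) (wRefl_ne_one a)
  omega

lemma ln_eq_one {g : Equiv.Perm (Fin (r+1) → ℤ)} (hg : isWP r g) (h : ln r g = 1) :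
    ∃ a, g = wRefl r a := by
  obtain ⟨L, hL, hlen⟩ := exists_min_word hg
  rw [h] at hlen
  obtain ⟨a, ha⟩ := List.length_eq_one_iff.mp hlen
  rw [ha, word_singleton] at hL
  exact ⟨a, hL.symm⟩

lemma ln_eq_two {g : Equiv.Perm (Fin (r+1) → ℤ)} (hg : isWP r g) (h : ln r g = 2) :
    ∃ a b, g = wRefl r a * wRefl r b := by
  obtain ⟨L, hL, hlen⟩ := exists_min_word hg
  rw [h] at hlen
  match L, hlen with
  | [a, b], _ =>
      rw [word_cons, word_singleton] at hL
      exact ⟨a, b, hL.symm⟩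

lemma descent {g : Equiv.Perm (Fin (r+1) → ℤ)} (hg : isWP r g) (h : g ≠ 1) :
    ∃ b, ln r (g * wRefl r b) + 1 = ln r g := by
  obtain ⟨L, hL, hlen⟩ := exists_min_word hg
  have hLne : L ≠ [] := by
    intro h0
    rw [h0] at hL
    exact h hL.symm
  refine ⟨L.getLast hLne, ?_⟩
  have hsplit : L.dropLast ++ [L.getLast hLne] = L := List.dropLast_append_getLast hLne
  have h1 : word r L.dropLast = g * wRefl r (L.getLast hLne) := by
    have := congrArg (word r) hsplit
    rw [word_append, word_singleton] at this
    rw [← hL, ← this, mul_assoc, wRefl_sq, mul_one]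
  have h2 : ln r (g * wRefl r (L.getLast hLne)) ≤ L.dropLast.length := ln_le h1
  have h3 : L.dropLast.length = L.length - 1 := List.length_dropLast
  have h4 : ln r g ≤ ln r (g * wRefl r (L.getLast hLne)) + 1 := by
    have hw : (g * wRefl r (L.getLast hLne)) * wRefl r (L.getLast hLne) = g := by
      rw [mul_assoc, wRefl_sq, mul_one]
    calc ln r g = ln r ((g * wRefl r (L.getLast hLne)) * wRefl r (L.getLast hLne)) := by
          rw [hw]
      _ ≤ ln r (g * wRefl r (L.getLast hLne)) + ln r (wRefl r (L.getLast hLne)) := by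
          apply ln_mul_le
          · obtain ⟨M, hM⟩ := hg
            exact ⟨M ++ [L.getLast hLne], by rw [word_append, word_singleton, hM]⟩
          · exact isWP_gen _
      _ = ln r (g * wRefl r (L.getLast hLne)) + 1 := by rw [ln_gen]
  have h5 : 1 ≤ L.length := by
    cases L with
    | nil => exact absurd rfl hLne
    | cons _ _ => simp
  omega

/-! ### Dihedral subgroup bookkeeping -/

section DihedralAux

variable {G : Type*} [Group G]

def inD (s t u : G) : Prop :=
  u = 1 ∨ u = s ∨ u = t ∨ u = s * t ∨ u = t * s ∨ u = s * t * s

lemma inD_inv {s t u : G} (hs : s * s = 1) (ht : t * t = 1) (h : inD s t u) :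
    inD s t u⁻¹ := by
  have hsi : s⁻¹ = s := by rw [inv_eq_iff_mul_eq_one, hs]
  have hti : t⁻¹ = t := by rw [inv_eq_iff_mul_eq_one, ht]
  rcases h with rfl | rfl | rfl | rfl | rfl | rfl
  · left; simp
  · right; left; rw [hsi]
  · right; right; left; rw [hti]
  · right; right; right; right; left; rw [mul_inv_rev, hsi, hti]
  · right; right; right; left; rw [mul_inv_rev, hsi, hti]
  · right; right; right; right; right
    rw [mul_inv_rev, mul_inv_rev, hsi, hti, mul_assoc]

lemma inD_smul {s t u : G} (hs : s * s = 1) (h : inD s t u) : inD s t (s * u) := by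
  rcases h with rfl | rfl | rfl | rfl | rfl | rfl
  · right; left; rw [mul_one]
  · left; rw [hs]
  · right; right; right; left; rfl
  · right; right; left; rw [← mul_assoc, hs, one_mul]
  · right; right; right; right; right; rw [← mul_assoc]
  · right; right; right; right; left
    rw [← mul_assoc, ← mul_assoc, hs, one_mul]

lemma inD_tmul {s t u : G} (hs : s * s = 1) (ht : t * t = 1)
    (hrel : s * t * s = t * s * t ∨ s * t = t * s) (h : inD s t u) : inD s t (t * u) := by
  rcases h with rfl | rfl | rfl | rfl | rfl | rfl
  · right; right; left; rw [mul_one]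
  · right; right; right; right; left; rfl
  · left; rw [ht]
  · -- t * (s * t)
    rcases hrel with hbr | hc
    · right; right; right; right; right
      rw [← mul_assoc]
      exact hbr.symm
    · right; left
      rw [hc, ← mul_assoc, ht, one_mul]
  · -- t * (t * s)
    right; left
    rw [← mul_assoc, ht, one_mul]
  · -- t * (s * t * s)
    rcases hrel with hbr | hc
    · right; right; right; left
      rw [hbr, ← mul_assoc, ← mul_assoc, ht, one_mul]
    · left
      have h1 : s * t * s = t := by rw [hc, mul_assoc, hs, mul_one]
      rw [h1, ht]

end DihedralAux

/-! ### The main positivity lemma -/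

lemma ee_nonneg (a j : Fin (r+1)) : 0 ≤ ee r a j := by
  rw [ee_apply]; split <;> norm_num

lemma inD_isWP {a b : Fin (r+1)} {u : Equiv.Perm (Fin (r+1) → ℤ)}
    (h : inD (wRefl r a) (wRefl r b) u) : isWP r u := by
  rcases h with rfl | rfl | rfl | rfl | rfl | rfl
  · exact isWP_one
  · exact isWP_gen a
  · exact isWP_gen b
  · exact isWP_mul (isWP_gen a) (isWP_gen b)
  · exact isWP_mul (isWP_gen b) (isWP_gen a)
  · exact isWP_mul (isWP_mul (isWP_gen a) (isWP_gen b)) (isWP_gen a)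

lemma one_pos_case (a : Fin (r+1)) (j : Fin (r+1)) :
    0 ≤ (1 : Equiv.Perm (Fin (r+1) → ℤ)) (ee r a) j := by
  exact ee_nonneg a j

lemma main_pos (n : ℕ) :
    ∀ g : Equiv.Perm (Fin (r+1) → ℤ), isWP r g → ln r g ≤ n →
      ∀ a : Fin (r+1), ln r g ≤ ln r (g * wRefl r a) → ∀ j, 0 ≤ g (ee r a) j := by
  classical
  induction n with
  | zero =>
      intro g hg hln a _ j
      have hg1 : g = 1 := eq_one_of_ln_zero hg (Nat.le_zero.mp hln)
      rw [hg1]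
      exact one_pos_case a j
  | succ n IH =>
      intro g hg hln a hga j
      by_cases hg1 : g = 1
      · rw [hg1]; exact one_pos_case a j
      obtain ⟨b, hdesc⟩ := descent hg hg1
      have hab : a ≠ b := by
        intro h
        rw [h] at hga
        omega
      have hss : wRefl r a * wRefl r a = 1 := wRefl_sq a
      have htt : wRefl r b * wRefl r b = 1 := wRefl_sq b
      have hrel : wRefl r a * wRefl r b * wRefl r a = wRefl r b * wRefl r a * wRefl r b ∨
          wRefl r a * wRefl r b = wRefl r b * wRefl r a := by
        rcases eq_or_ne a (Fin.last r) with ha | ha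
        · have hb : b ≠ Fin.last r := fun h => hab (ha.trans h.symm)
          left
          rw [ha]
          exact (wRefl_braid hb).symm
        · rcases eq_or_ne b (Fin.last r) with hb | hb
          · left
            rw [hb]
            exact wRefl_braid ha
          · right
            exact wRefl_comm ha hb hab
      have hgpos : 1 ≤ ln r g := ln_pos_of_ne_one hg hg1
      set X : ℕ → Prop := fun m =>
        ∃ u, inD (wRefl r a) (wRefl r b) u ∧ ln r (g * u⁻¹) + ln r u = ln r g ∧
          ln r u = m with hX_def
      have hX1 : X 1 := by
        refine ⟨wRefl r b, Or.inr (Or.inr (Or.inl rfl)), ?_, ln_gen b⟩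
        rw [wRefl_inv, ln_gen]
        omega
      have hm0ge : 1 ≤ Nat.findGreatest X (ln r g) := Nat.le_findGreatest hgpos hX1
      have hXm0 : X (Nat.findGreatest X (ln r g)) := Nat.findGreatest_spec hgpos hX1
      obtain ⟨u, hu_inD, huX, hulen⟩ := hXm0
      have hu_isWP : isWP r u := inD_isWP hu_inD
      have huinv_isWP : isWP r u⁻¹ := isWP_inv hu_isWP
      have hv_isWP : isWP r (g * u⁻¹) := isWP_mul hg huinv_isWP
      have hvu : (g * u⁻¹) * u = g := inv_mul_cancel_right g u
      have hsum : ln r (g * u⁻¹) + ln r u = ln r g := huX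
      have hupos : 1 ≤ ln r u := by omega
      have hvle : ln r (g * u⁻¹) ≤ n := by omega
      have hmax : ∀ u', inD (wRefl r a) (wRefl r b) u' →
          ln r (g * u'⁻¹) + ln r u' = ln r g → ln r u' ≤ Nat.findGreatest X (ln r g) := by
        intro u' hD hX'
        exact Nat.le_findGreatest (by omega) ⟨u', hD, hX', rfl⟩
      have hclaim : ∀ c : Fin (r+1),
          (∀ u0, inD (wRefl r a) (wRefl r b) u0 → inD (wRefl r a) (wRefl r b) (wRefl r c * u0))
          → ln r (g * u⁻¹) ≤ ln r ((g * u⁻¹) * wRefl r c) := by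
        intro c hclosed
        by_contra hlt
        push_neg at hlt
        have hD' : inD (wRefl r a) (wRefl r b) (wRefl r c * u) := hclosed u hu_inD
        have hgu' : g * (wRefl r c * u)⁻¹ = (g * u⁻¹) * wRefl r c := by
          rw [mul_inv_rev, wRefl_inv, ← mul_assoc]
        have hid : ((g * u⁻¹) * wRefl r c) * (wRefl r c * u) = g := by
          rw [mul_assoc, ← mul_assoc (wRefl r c), wRefl_sq, one_mul, hvu]
        have e1 : ln r g ≤ ln r ((g * u⁻¹) * wRefl r c) + ln r (wRefl r c * u) := by
          conv_lhs => rw [← hid]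
          exact ln_mul_le (isWP_mul hv_isWP (isWP_gen c)) (isWP_mul (isWP_gen c) hu_isWP)
        have e2 : ln r (wRefl r c * u) ≤ 1 + ln r u := by
          have h2 := ln_mul_le (isWP_gen c) hu_isWP
          rw [ln_gen] at h2
          exact h2
        have e3 : ln r (g * (wRefl r c * u)⁻¹) + ln r (wRefl r c * u) = ln r g := by
          rw [hgu']
          omega
        have e4 := hmax _ hD' e3
        have e5 : ln r (wRefl r c * u) ≥ ln r u + 1 := by omega
        omega
      have hclaim_s : ln r (g * u⁻¹) ≤ ln r ((g * u⁻¹) * wRefl r a) :=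
        hclaim a (fun u0 h0 => inD_smul hss h0)
      have hclaim_t : ln r (g * u⁻¹) ≤ ln r ((g * u⁻¹) * wRefl r b) :=
        hclaim b (fun u0 h0 => inD_tmul hss htt hrel h0)
      have hpos_s : ∀ j, 0 ≤ (g * u⁻¹) (ee r a) j := IH _ hv_isWP hvle a hclaim_s
      have hpos_t : ∀ j, 0 ≤ (g * u⁻¹) (ee r b) j := IH _ hv_isWP hvle b hclaim_t
      have hv_add : ∀ x y, (g * u⁻¹) (x + y) = (g * u⁻¹) x + (g * u⁻¹) y :=
        isWP_isAdd hv_isWP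
      have hpos_st : ∀ j, 0 ≤ (g * u⁻¹) (ee r a + ee r b) j := by
        intro j'
        rw [hv_add, Pi.add_apply]
        exact add_nonneg (hpos_s j') (hpos_t j')
      have hgv : ∀ x, g x = (g * u⁻¹) (u x) := by
        intro x
        conv_lhs => rw [← hvu]
        rfl
      have h_us : ln r u ≤ ln r (u * wRefl r a) := by
        have h1 : (g * u⁻¹) * (u * wRefl r a) = g * wRefl r a := by
          rw [← mul_assoc, hvu]
        have h2 : ln r (g * wRefl r a) ≤ ln r (g * u⁻¹) + ln r (u * wRefl r a) := by
          conv_lhs => rw [← h1]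
          exact ln_mul_le hv_isWP (isWP_mul hu_isWP (isWP_gen a))
        omega
      rcases hu_inD with hu | hu | hu | hu | hu | hu
      · -- u = 1 : impossible since ln u ≥ 1
        rw [hu, ln_one] at hupos
        omega
      · -- u = s : contradiction
        rw [hu, hss, ln_one, ln_gen] at h_us
        omega
      · -- u = t
        rcases eq_or_ne a (Fin.last r) with ha | ha
        · have hb : b ≠ Fin.last r := fun h => hab (ha.trans h.symm)
          have harg : u (ee r a) = ee r a + ee r b := by
            rw [hu, ha, wRefl_ee_last hb]
          rw [hgv, harg]
          exact hpos_st j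
        · rcases eq_or_ne b (Fin.last r) with hb | hb
          · have harg : u (ee r a) = ee r a + ee r b := by
              rw [hu, hb, wRefl_last_ee ha]
            rw [hgv, harg]
            exact hpos_st j
          · have harg : u (ee r a) = ee r a := by
              rw [hu, wRefl_ee_other hb ha (Ne.symm hab)]
            rw [hgv, harg]
            exact hpos_s j
      · -- u = s * t
        rcases eq_or_ne a (Fin.last r) with ha | ha
        · -- a = last : value e_b, positive
          have hb : b ≠ Fin.last r := fun h => hab (ha.trans h.symm)
          have harg : (wRefl r a * wRefl r b) (ee r a) = ee r b := by
            rw [Equiv.Perm.mul_apply, ha, wRefl_ee_last hb,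
              (isAdd_wRefl (Fin.last r) : IsAdd _) (ee r (Fin.last r)) (ee r b),
              wRefl_ee_self, wRefl_last_ee hb]
            abel
          have harg2 : u (ee r a) = ee r b := by rw [hu]; exact harg
          rw [hgv, harg2]
          exact hpos_t j
        · rcases eq_or_ne b (Fin.last r) with hb | hb
          · -- b = last : value e_last = e_b, positive
            have harg : (wRefl r a * wRefl r b) (ee r a) = ee r b := by
              rw [Equiv.Perm.mul_apply, hb, wRefl_last_ee ha,
                (isAdd_wRefl a : IsAdd _) (ee r a) (ee r (Fin.last r)),
                wRefl_ee_self, wRefl_ee_last ha]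
              abel
            have harg2 : u (ee r a) = ee r b := by rw [hu]; exact harg
            rw [hgv, harg2]
            exact hpos_t j
          · -- both leaves : contradiction
            have hc := wRefl_comm ha hb hab
            have h1 : (wRefl r a * wRefl r b) * wRefl r a = wRefl r b := by
              rw [hc, mul_assoc, hss, mul_one]
            rw [hu, h1, ln_gen] at h_us
            have hWP : isWP r (wRefl r a * wRefl r b) :=
              isWP_mul (isWP_gen a) (isWP_gen b)
            have : ln r (wRefl r a * wRefl r b) = 0 ∨ ln r (wRefl r a * wRefl r b) = 1 := by
              omega
            rcases this with h0 | h0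
            · have he := eq_one_of_ln_zero hWP h0
              have : wRefl r a = (wRefl r b)⁻¹ := mul_eq_one_iff_eq_inv.mp he
              rw [wRefl_inv] at this
              exact absurd (wRefl_index_inj this) hab
            · obtain ⟨k, hk⟩ := ln_eq_one hWP h0
              exact absurd hk (L1 hab)
      · -- u = t * s : contradiction
        have h1 : (wRefl r b * wRefl r a) * wRefl r a = wRefl r b := by
          rw [mul_assoc, hss, mul_one]
        rw [hu, h1, ln_gen] at h_us
        have hWP : isWP r (wRefl r b * wRefl r a) := isWP_mul (isWP_gen b) (isWP_gen a)
        have : ln r (wRefl r b * wRefl r a) = 0 ∨ ln r (wRefl r b * wRefl r a) = 1 := by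
          omega
        rcases this with h0 | h0
        · have he := eq_one_of_ln_zero hWP h0
          have : wRefl r b = (wRefl r a)⁻¹ := mul_eq_one_iff_eq_inv.mp he
          rw [wRefl_inv] at this
          exact absurd (wRefl_index_inj this) (Ne.symm hab)
        · obtain ⟨k, hk⟩ := ln_eq_one hWP h0
          exact absurd hk (L1 (Ne.symm hab))
      · -- u = s * t * s
        rcases eq_or_ne a (Fin.last r) with ha | ha
        · -- a = last : contradiction via L2/L3 for the braid word in b
          have hb : b ≠ Fin.last r := fun h => hab (ha.trans h.symm)
          have hbr := wRefl_braid hb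
          have h1 : (wRefl r a * wRefl r b * wRefl r a) * wRefl r a
              = wRefl r a * wRefl r b := by
            rw [mul_assoc, hss, mul_one]
          rw [hu, h1] at h_us
          have h2 : ln r (wRefl r a * wRefl r b) ≤ 2 := by
            have h3 := ln_mul_le (isWP_gen a) (isWP_gen b)
            rw [ln_gen, ln_gen] at h3
            omega
          have hWP : isWP r (wRefl r a * wRefl r b * wRefl r a) :=
            isWP_mul (isWP_mul (isWP_gen a) (isWP_gen b)) (isWP_gen a)
          have h4 : ln r (wRefl r a * wRefl r b * wRefl r a) ≤ 2 := by omega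
          have heqbr : wRefl r a * wRefl r b * wRefl r a
              = wRefl r b * wRefl r (Fin.last r) * wRefl r b := by
            rw [ha, ← hbr]
          rcases Nat.lt_or_ge (ln r (wRefl r a * wRefl r b * wRefl r a)) 1 with h0 | h0
          · have he := eq_one_of_ln_zero hWP (by omega)
            rw [heqbr] at he
            have : wRefl r b * wRefl r (Fin.last r) = (wRefl r b)⁻¹ :=
              mul_eq_one_iff_eq_inv.mp he
            rw [wRefl_inv] at this
            have : wRefl r (Fin.last r) = 1 := by
              have h5 : wRefl r b * wRefl r (Fin.last r) = wRefl r b * 1 := by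
                rw [mul_one]; exact this
              exact mul_left_cancel h5
            exact absurd this (wRefl_ne_one _)
          · rcases Nat.lt_or_ge (ln r (wRefl r a * wRefl r b * wRefl r a)) 2 with h5 | h5
            · obtain ⟨k, hk⟩ := ln_eq_one hWP (by omega)
              rw [heqbr] at hk
              exact absurd hk (L2 hb)
            · obtain ⟨k, l, hkl⟩ := ln_eq_two hWP (by omega)
              rw [heqbr] at hkl
              exact absurd hkl (L3 hb)
        · rcases eq_or_ne b (Fin.last r) with hb | hb
          · -- b = last : contradiction via L2/L3 for the braid word in a
            have h1 : (wRefl r a * wRefl r b * wRefl r a) * wRefl r a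
                = wRefl r a * wRefl r b := by
              rw [mul_assoc, hss, mul_one]
            rw [hu, h1] at h_us
            have h2 : ln r (wRefl r a * wRefl r b) ≤ 2 := by
              have h3 := ln_mul_le (isWP_gen a) (isWP_gen b)
              rw [ln_gen, ln_gen] at h3
              omega
            have hWP : isWP r (wRefl r a * wRefl r b * wRefl r a) :=
              isWP_mul (isWP_mul (isWP_gen a) (isWP_gen b)) (isWP_gen a)
            have h4 : ln r (wRefl r a * wRefl r b * wRefl r a) ≤ 2 := by omega
            rcases Nat.lt_or_ge (ln r (wRefl r a * wRefl r b * wRefl r a)) 1 with h0 | h0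
            · have he := eq_one_of_ln_zero hWP (by omega)
              have : wRefl r a * wRefl r b = (wRefl r a)⁻¹ :=
                mul_eq_one_iff_eq_inv.mp he
              rw [wRefl_inv] at this
              have h6 : wRefl r a * wRefl r b = wRefl r a * 1 := by
                rw [mul_one]; exact this
              exact absurd (mul_left_cancel h6) (wRefl_ne_one b)
            · rcases Nat.lt_or_ge (ln r (wRefl r a * wRefl r b * wRefl r a)) 2 with h5 | h5
              · obtain ⟨k, hk⟩ := ln_eq_one hWP (by omega)
                rw [hb] at hk
                exact absurd hk (L2 ha)
              · obtain ⟨k, l, hkl⟩ := ln_eq_two hWP (by omega)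
                rw [hb] at hkl
                exact absurd hkl (L3 ha)
          · -- both leaves : value e_a, positive
            have na : ∀ x, wRefl r a (-x) = - wRefl r a x := (isAdd_wRefl a).neg
            have nb : ∀ x, wRefl r b (-x) = - wRefl r b x := (isAdd_wRefl b).neg
            have harg : (wRefl r a * wRefl r b * wRefl r a) (ee r a) = ee r a := by
              rw [Equiv.Perm.mul_apply, Equiv.Perm.mul_apply, wRefl_ee_self, nb,
                wRefl_ee_other hb ha (Ne.symm hab), na, wRefl_ee_self, neg_neg]
            have harg2 : u (ee r a) = ee r a := by rw [hu]; exact harg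
            rw [hgv, harg2]
            exact hpos_s j

/-! ### Every real root is positive or negative -/

lemma sign_theorem {g : Equiv.Perm (Fin (r+1) → ℤ)} (hg : isWP r g) (a : Fin (r+1)) :
    (∀ j, 0 ≤ g (ee r a) j) ∨ (∀ j, g (ee r a) j ≤ 0) := by
  rcases le_or_gt (ln r g) (ln r (g * wRefl r a)) with h | h
  · left
    exact main_pos (ln r g) g hg le_rfl a h
  · right
    have hg' : isWP r (g * wRefl r a) := isWP_mul hg (isWP_gen a)
    have hid : (g * wRefl r a) * wRefl r a = g := by
      rw [mul_assoc, wRefl_sq, mul_one]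
    have h2 : ln r (g * wRefl r a) ≤ ln r ((g * wRefl r a) * wRefl r a) := by
      rw [hid]
      omega
    have hpos := main_pos (ln r (g * wRefl r a)) (g * wRefl r a) hg' le_rfl a h2
    have hxeq : g (ee r a) = - (g * wRefl r a) (ee r a) := by
      have h3 : g (ee r a) = (g * wRefl r a) (wRefl r a (ee r a)) := by
        conv_lhs => rw [← hid]
        rfl
      rw [h3, wRefl_ee_self, (isWP_isAdd hg').neg]
    intro j
    rw [hxeq, Pi.neg_apply]
    have := hpos j
    omega

lemma isWP_of_mem {g : Equiv.Perm (Fin (r+1) → ℤ)} (hg : g ∈ weylW r) : isWP r g := by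
  induction hg using Subgroup.closure_induction with
  | mem x hx =>
      obtain ⟨i, rfl⟩ := hx
      exact isWP_gen i
  | one => exact isWP_one
  | mul x y _ _ hx hy => exact isWP_mul hx hy
  | inv x _ hx => exact isWP_inv hx

end Star

/-- If `α` is a positive real root with `k_{r+1} ≥ 1`, then `k_i ≤ k_{r+1}` for all
`i = 1, …, r`. -/
theorem coeff_le_last_of_posRealRoot (r : ℕ) (hr : 1 ≤ r) (α : Fin (r + 1) → ℤ)
    (hroot : α ∈ realRoots r) (hpos : ∀ j, 0 ≤ α j) (hlast : 1 ≤ α (Fin.last r)) :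
    ∀ i : Fin r, α i.castSucc ≤ α (Fin.last r) := by
  intro i
  obtain ⟨w, hw, jj, hα⟩ := hroot
  have hwWP : Star.isWP r w := Star.isWP_of_mem hw
  have hc : (i.castSucc : Fin (r+1)) ≠ Fin.last r := (Fin.castSucc_lt_last i).ne
  have hgWP : Star.isWP r (wRefl r i.castSucc * w) :=
    Star.isWP_mul (Star.isWP_gen i.castSucc) hwWP
  have hβ : (wRefl r i.castSucc * w) (Star.ee r jj) = wRefl r i.castSucc α := by
    rw [Equiv.Perm.mul_apply]
    congr 1
    exact hα.symm
  have hsign := Star.sign_theorem hgWP jj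
  have hβlast : (wRefl r i.castSucc α) (Fin.last r) = α (Fin.last r) :=
    Star.wRefl_last_coord hc α
  have hβleaf : (wRefl r i.castSucc α) i.castSucc
      = α (Fin.last r) - α i.castSucc := Star.wRefl_leaf_coord hc α
  rcases hsign with hpos' | hneg'
  · have := hpos' i.castSucc
    rw [hβ, hβleaf] at this
    omega
  · have := hneg' (Fin.last r)
    rw [hβ, hβlast] at this
    omega
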